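/- Let λ ≤ μ be compositions of n and let γ be a composition with λ < γ < μ. If λ/μ is an alternate odd composition, then λ/γ is also an alternate odd composition. (Similarly, if λ/μ is alternate even then λ/γ is alternate even.) -/
import Mathlib


/-- `μ` is a composition of `n`: a list of positive integers summing to `n`. -/
def IsComposition (n : ℕ) (μ : List ℕ) : Prop := (∀ x ∈ μ, 0 < x) ∧ μ.sum = n

/-- Merge the list `l` into consecutive blocks whose sizes are given by `ν`,
replacing each block by its sum. -/
def mergeBlocks : List ℕ → List ℕ → List ℕ
  | [], _ => []
  | k :: ks, l => (l.take k).sum :: mergeBlocks ks (l.drop k)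

/-- `ν` witnesses that `lam` is obtained from `mu` by merging consecutive blocks
of sizes `ν₁, ν₂, …` (this is the composition `lam/mu`). -/
def QuotOf (lam mu ν : List ℕ) : Prop :=
  (∀ x ∈ ν, 0 < x) ∧ ν.sum = mu.length ∧ lam = mergeBlocks ν mu

/-- `lam ≤ mu` in the refinement order on compositions. -/
def Refines (lam mu : List ℕ) : Prop := ∃ ν, QuotOf lam mu ν

/-- `lam < mu` in the refinement order on compositions. -/
def StrictRefines (lam mu : List ℕ) : Prop := Refines lam mu ∧ lam ≠ mu

/-- A composition is alternate odd if the entries at even distance from the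
end (the last, third-to-last, …) all equal `1`. -/
def AlternateOdd (μ : List ℕ) : Prop :=
  ∀ i < μ.length, (μ.length - 1 - i) % 2 = 0 → μ.getD i 0 = 1

/-- A composition is alternate even if the entries at odd distance from the
end (the second-to-last, fourth-to-last, …) all equal `1`. -/
def AlternateEven (μ : List ℕ) : Prop :=
  ∀ i < μ.length, (μ.length - 1 - i) % 2 = 1 → μ.getD i 0 = 1

lemma mergeBlocks_length (a b : List ℕ) : (mergeBlocks a b).length = a.length := by
  induction a generalizing b with
  | nil => simp [mergeBlocks]
  | cons k ks ih => simp [mergeBlocks, ih]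

lemma mergeBlocks_take (b c : List ℕ) (k : ℕ) :
    (mergeBlocks b c).take k = mergeBlocks (b.take k) c := by
  induction b generalizing c k with
  | nil => simp [mergeBlocks]
  | cons x xs ih =>
    cases k with
    | zero => simp [mergeBlocks]
    | succ m => simp [mergeBlocks, ih]

lemma mergeBlocks_drop (b c : List ℕ) (k : ℕ) :
    (mergeBlocks b c).drop k = mergeBlocks (b.drop k) (c.drop (b.take k).sum) := by
  induction b generalizing c k with
  | nil => simp [mergeBlocks]
  | cons x xs ih =>
    cases k with
    | zero => simp
    | succ m => simp [mergeBlocks, ih, List.drop_drop, Nat.add_comm]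

lemma mergeBlocks_sum (b c : List ℕ) :
    (mergeBlocks b c).sum = (c.take b.sum).sum := by
  induction b generalizing c with
  | nil => simp [mergeBlocks]
  | cons x xs ih =>
    simp [mergeBlocks, ih, List.take_add]

lemma mergeBlocks_assoc (a b c : List ℕ) :
    mergeBlocks a (mergeBlocks b c) = mergeBlocks (mergeBlocks a b) c := by
  induction a generalizing b c with
  | nil => simp [mergeBlocks]
  | cons k ks ih =>
    simp only [mergeBlocks, mergeBlocks_take, mergeBlocks_drop, mergeBlocks_sum, ih]

lemma length_le_sum' {l : List ℕ} (h : ∀ x ∈ l, 0 < x) : l.length ≤ l.sum := by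
  induction l with
  | nil => simp
  | cons x xs ih =>
    have h1 := h x (by simp)
    have h2 := ih (fun y hy => h y (by simp [hy]))
    simp only [List.length_cons, List.sum_cons]
    omega

lemma take_sum_lt {mu : List ℕ} (hmu : ∀ x ∈ mu, 0 < x) {a b : ℕ}
    (hab : a < b) (hb : b ≤ mu.length) : (mu.take a).sum < (mu.take b).sum := by
  have h : mu.take b = mu.take a ++ (mu.drop a).take (b - a) := by
    rw [← List.take_add]
    congr 1
    omega
  rw [h, List.sum_append]
  have hlen : ((mu.drop a).take (b - a)).length = b - a := by
    simp only [List.length_take, List.length_drop]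
    omega
  have hpos := length_le_sum' (l := (mu.drop a).take (b - a))
    (fun x hx => hmu x (List.mem_of_mem_drop (List.mem_of_mem_take hx)))
  omega

lemma mergeBlocks_getD_le (a : List ℕ) : ∀ (b : List ℕ), (∀ x ∈ b, 0 < x) →
    a.sum ≤ b.length → ∀ i, a.getD i 0 ≤ (mergeBlocks a b).getD i 0 := by
  induction a with
  | nil => simp [mergeBlocks]
  | cons k ks ih =>
    intro b hb hab i
    simp only [List.sum_cons] at hab
    cases i with
    | zero =>
      simp only [mergeBlocks, List.getD_cons_zero]
      have h1 : (b.take k).length = k := by rw [List.length_take]; omega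
      have h2 := length_le_sum' (l := b.take k) (fun x hx => hb x (List.mem_of_mem_take hx))
      omega
    | succ m =>
      simp only [mergeBlocks, List.getD_cons_succ]
      apply ih (b.drop k) (fun x hx => hb x (List.mem_of_mem_drop hx))
      rw [List.length_drop]; omega

lemma mergeBlocks_inj : ∀ (ν mu ν' : List ℕ), (∀ x ∈ mu, 0 < x) →
    (∀ x ∈ ν, 0 < x) → (∀ x ∈ ν', 0 < x) →
    ν.sum = mu.length → ν'.sum = mu.length →
    mergeBlocks ν mu = mergeBlocks ν' mu → ν = ν' := by
  intro ν
  induction ν with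
  | nil =>
    intro mu ν' _ _ hν' hs hs' _
    cases ν' with
    | nil => rfl
    | cons x xs =>
      have hx := hν' x (by simp)
      simp only [List.sum_nil] at hs
      simp only [List.sum_cons] at hs'
      omega
  | cons k ks ih =>
    intro mu ν' hmu hν hν' hs hs' heq
    cases ν' with
    | nil =>
      have hk := hν k (by simp)
      simp only [List.sum_cons] at hs
      simp only [List.sum_nil] at hs'
      omega
    | cons k' ks' =>
      simp only [mergeBlocks, List.cons.injEq] at heq
      obtain ⟨hhead, htail⟩ := heq
      simp only [List.sum_cons] at hs hs'
      have hk : k = k' := by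
        rcases Nat.lt_trichotomy k k' with h | h | h
        · exact absurd hhead (Nat.ne_of_lt (take_sum_lt hmu h (by omega)))
        · exact h
        · exact absurd hhead.symm (Nat.ne_of_lt (take_sum_lt hmu h (by omega)))
      subst hk
      have : ks = ks' := by
        apply ih (mu.drop k) ks' (fun x hx => hmu x (List.mem_of_mem_drop hx))
          (fun x hx => hν x (by simp [hx])) (fun x hx => hν' x (by simp [hx]))
        · rw [List.length_drop]; omega
        · rw [List.length_drop]; omega
        · exact htail
      rw [this]

/-- If `λ ≤ μ` and `λ < γ < μ`, and `λ/μ` is alternate odd (resp. even), then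
`λ/γ` is alternate odd (resp. even). -/
theorem stmt3 (n : ℕ) (lam gam mu : List ℕ)
    (hlam : IsComposition n lam) (hgam : IsComposition n gam)
    (hmu : IsComposition n mu)
    (h1 : StrictRefines lam gam) (h2 : StrictRefines gam mu)
    (q1 q2 : List ℕ) (hq1 : QuotOf lam mu q1) (hq2 : QuotOf lam gam q2) :
    (AlternateOdd q1 → AlternateOdd q2) ∧
    (AlternateEven q1 → AlternateEven q2) := by
  obtain ⟨⟨q3, hq3pos, hq3sum, hgameq⟩, -⟩ := h2
  obtain ⟨hq1pos, hq1sum, hlameq⟩ := hq1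
  obtain ⟨hq2pos, hq2sum, hlameq2⟩ := hq2
  have hq3len : q3.length = gam.length := by
    rw [hgameq, mergeBlocks_length]
  -- `q2.sum = q3.length`
  have hsum23 : q2.sum = q3.length := by rw [hq3len, hq2sum]
  -- entries of `mergeBlocks q2 q3` dominate those of `q2`
  have hdom : ∀ i, q2.getD i 0 ≤ (mergeBlocks q2 q3).getD i 0 :=
    mergeBlocks_getD_le q2 q3 hq3pos (le_of_eq hsum23)
  -- positivity of entries of `mergeBlocks q2 q3`
  have hqpos : ∀ x ∈ mergeBlocks q2 q3, 0 < x := by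
    intro x hx
    obtain ⟨i, hi, rfl⟩ := List.getElem_of_mem hx
    have hi2 : i < q2.length := by rwa [mergeBlocks_length] at hi
    have h2i : 0 < q2[i] := hq2pos _ (List.getElem_mem hi2)
    have := hdom i
    rw [List.getD_eq_getElem _ _ hi2, List.getD_eq_getElem _ _ hi] at this
    omega
  -- sum of `mergeBlocks q2 q3` is `mu.length`
  have hqsum : (mergeBlocks q2 q3).sum = mu.length := by
    rw [mergeBlocks_sum, hsum23, List.take_length, hq3sum]
  -- `q1 = mergeBlocks q2 q3` by injectivity
  have hq1eq : q1 = mergeBlocks q2 q3 := by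
    apply mergeBlocks_inj q1 mu (mergeBlocks q2 q3) hmu.1 hq1pos hqpos hq1sum hqsum
    rw [← hlameq, hlameq2, hgameq, mergeBlocks_assoc]
  have hlen : q1.length = q2.length := by rw [hq1eq, mergeBlocks_length]
  constructor
  · intro hodd i hi hpar
    have hget : q1.getD i 0 = 1 := hodd i (by omega) (by omega)
    have hle : q2.getD i 0 ≤ 1 := by rw [← hq1eq] at hdom; have := hdom i; omega
    have hge : 0 < q2.getD i 0 := by
      rw [List.getD_eq_getElem _ _ hi]
      exact hq2pos _ (List.getElem_mem hi)
    omega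
  · intro heven i hi hpar
    have hget : q1.getD i 0 = 1 := heven i (by omega) (by omega)
    have hle : q2.getD i 0 ≤ 1 := by rw [← hq1eq] at hdom; have := hdom i; omega
    have hge : 0 < q2.getD i 0 := by
      rw [List.getD_eq_getElem _ _ hi]
      exact hq2pos _ (List.getElem_mem hi)
    omega
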